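/- Let G be a directed graph and v_o a vertex such that G − v_o is a 'directed fat tree' (its underlying undirected simple graph, after merging parallel/antiparallel edge pairs, is a tree). Then the subgraph of G − v_o consisting of all arcs lying on some directed path from a neighbor of v_o to a fixed vertex v_c, with v_o split into one leaf copy per neighbor, is again a directed fat tree. -/

import Mathlib

section
variable {V E : Type}
variable (src dst : E → V) (vo : V)

/-- A directed multigraph is a *fat tree* on the vertex set `S` if merging all
arcs with the same endpoints into single undirected edges yields a tree. -/
def IsFatTree {W : Type} (tl hd : E → W) (A : Set E) : Prop :=
  (SimpleGraph.fromRel (fun a b : W => ∃ e ∈ A, tl e = a ∧ hd e = b)).IsTree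

/-- Vertices of the split graph: ordinary vertices (different from `v_o`),
plus one copy of `v_o` for each neighbor `w` of `v_o`. -/
def SplitV : Type :=
  {v : V // v ≠ vo} ⊕
  {w : V // w ≠ vo ∧ ∃ e, (src e = vo ∧ dst e = w) ∨ (dst e = vo ∧ src e = w)}

/-- The split vertex `a` is the tail of arc `e` in the split graph. -/
def AtTail (a : SplitV src dst vo) (e : E) : Prop :=
  match a with
  | Sum.inl v => src e = v.1
  | Sum.inr w => src e = vo ∧ dst e = w.1

/-- The split vertex `b` is the head of arc `e` in the split graph. -/
def AtHead (b : SplitV src dst vo) (e : E) : Prop :=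
  match b with
  | Sum.inl v => dst e = v.1 ∧ dst e ≠ vo
  | Sum.inr w => dst e = vo ∧ src e = w.1

/-- One directed step in the split graph. -/
def SplitStep (a b : SplitV src dst vo) : Prop := ∃ e, AtTail src dst vo a e ∧ AtHead src dst vo b e

/-- Directed reachability in the split graph. -/
def SplitReach : SplitV src dst vo → SplitV src dst vo → Prop :=
  Relation.ReflTransGen (SplitStep src dst vo)

/-- An arc is kept iff it lies on some directed path from a copy of `v_o`
to `v_c`. -/
def Kept (vc : V) (hvc : vc ≠ vo) (e : E) : Prop :=
  ∃ (w : {w : V // w ≠ vo ∧ ∃ e, (src e = vo ∧ dst e = w) ∨ (dst e = vo ∧ src e = w)})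
    (a b : SplitV src dst vo),
    AtTail src dst vo a e ∧ AtHead src dst vo b e ∧
    SplitReach src dst vo (Sum.inr w) a ∧
    SplitReach src dst vo b (Sum.inl ⟨vc, hvc⟩)

/-- The vertices touched by the kept arcs, together with `v_c`. -/
def KeptV (vc : V) (hvc : vc ≠ vo) : Set (SplitV src dst vo) :=
  {x | x = Sum.inl ⟨vc, hvc⟩ ∨
    ∃ e, Kept src dst vo vc hvc e ∧ (AtTail src dst vo x e ∨ AtHead src dst vo x e)}

/-- The kept graph. -/
private def KG (vc : V) (hvc : vc ≠ vo) : SimpleGraph (KeptV src dst vo vc hvc) :=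
  SimpleGraph.fromRel
    (fun a b : KeptV src dst vo vc hvc =>
      ∃ e, Kept src dst vo vc hvc e ∧
        AtTail src dst vo a.1 e ∧ AtHead src dst vo b.1 e)

/-- The original graph on `V \ {v_o}`. -/
private def OG : SimpleGraph {v : V // v ≠ vo} :=
  SimpleGraph.fromRel (fun a b : {v : V // v ≠ vo} =>
    ∃ e ∈ (Set.univ : Set {e : E // src e ≠ vo ∧ dst e ≠ vo}),
      (⟨src e.1, e.2.1⟩ : {v : V // v ≠ vo}) = a ∧
      (⟨dst e.1, e.2.2⟩ : {v : V // v ≠ vo}) = b)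

/-- Collapse split vertices back to ordinary vertices. -/
private def fmap : SplitV src dst vo → {v : V // v ≠ vo}
  | Sum.inl v => v
  | Sum.inr w => ⟨w.1, w.2.1⟩

variable {src dst vo}

private theorem atTail_unique {a a' : SplitV src dst vo} {e : E}
    (h : AtTail src dst vo a e) (h' : AtTail src dst vo a' e) : a = a' := by
  cases a with
  | inl v =>
    cases a' with
    | inl v' => exact congrArg Sum.inl (Subtype.ext (h.symm.trans h'))
    | inr w => exact absurd (h.symm.trans h'.1) v.2
  | inr w =>
    cases a' with
    | inl v' => exact absurd (h.1.symm.trans h') (fun hh => v'.2 hh.symm)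
    | inr w' => exact congrArg Sum.inr (Subtype.ext (h.2.symm.trans h'.2))

private theorem atHead_unique {b b' : SplitV src dst vo} {e : E}
    (h : AtHead src dst vo b e) (h' : AtHead src dst vo b' e) : b = b' := by
  cases b with
  | inl v =>
    cases b' with
    | inl v' => exact congrArg Sum.inl (Subtype.ext (h.1.symm.trans h'.1))
    | inr w => exact absurd h'.1 h.2
  | inr w =>
    cases b' with
    | inl v' => exact absurd h.1 h'.2
    | inr w' => exact congrArg Sum.inr (Subtype.ext (h.2.symm.trans h'.2))

variable {vc : V} {hvc : vc ≠ vo}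

private theorem vc_mem : (Sum.inl ⟨vc, hvc⟩ : SplitV src dst vo) ∈ KeptV src dst vo vc hvc :=
  Or.inl rfl

/-- Reachability within the kept graph towards `v_c`. -/
private theorem reach_to_vc {c : SplitV src dst vo}
    (hr : SplitReach src dst vo c (Sum.inl ⟨vc, hvc⟩)) :
    (∃ w, SplitReach src dst vo (Sum.inr w) c) → ∀ hc : c ∈ KeptV src dst vo vc hvc,
      (KG src dst vo vc hvc).Reachable ⟨c, hc⟩ ⟨_, vc_mem⟩ := by
  induction hr using Relation.ReflTransGen.head_induction_on with
  | refl => exact fun _ hc => SimpleGraph.Reachable.refl _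
  | @head a c' hstep htail ih =>
    rintro ⟨w, hw⟩ ha
    obtain ⟨e, hte, hhe⟩ := hstep
    have hkept : Kept src dst vo vc hvc e := ⟨w, a, c', hte, hhe, hw, htail⟩
    have hc' : c' ∈ KeptV src dst vo vc hvc := Or.inr ⟨e, hkept, Or.inr hhe⟩
    have ihr := ih ⟨w, hw.tail ⟨e, hte, hhe⟩⟩ hc'
    by_cases hac : a = c'
    · subst hac; exact ihr
    · refine (SimpleGraph.Adj.reachable ?_).trans ihr
      exact ⟨fun hh => hac (congrArg Subtype.val hh), Or.inl ⟨e, hkept, hte, hhe⟩⟩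

private theorem reach_all (x : KeptV src dst vo vc hvc) :
    (KG src dst vo vc hvc).Reachable x ⟨_, vc_mem⟩ := by
  obtain ⟨xv, hx⟩ := x
  rcases hx with hx | ⟨e, hk, ht | hh⟩
  · subst hx; exact SimpleGraph.Reachable.refl _
  all_goals {
    obtain ⟨w, a, b, hta, hhb, hwa, hbvc⟩ := hk
    first
    | (have hxa : xv = a := atTail_unique ht hta
       subst hxa
       exact reach_to_vc (Relation.ReflTransGen.head ⟨e, hta, hhb⟩ hbvc) ⟨w, hwa⟩ _)
    | (have hxb : xv = b := atHead_unique hh hhb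
       subst hxb
       exact reach_to_vc hbvc ⟨w, hwa.tail ⟨e, hta, hhb⟩⟩ _)
  }

private theorem kg_connected : (KG src dst vo vc hvc).Connected := by
  rw [SimpleGraph.connected_iff]
  exact ⟨fun x y => (reach_all x).trans (reach_all y).symm, ⟨⟨_, vc_mem⟩⟩⟩

/-- Adjacency in the kept graph between two ordinary vertices descends to `OG`. -/
private theorem adj_inl {a b : KeptV src dst vo vc hvc}
    (h : (KG src dst vo vc hvc).Adj a b) {va vb : {v : V // v ≠ vo}}
    (ha : a.1 = Sum.inl va) (hb : b.1 = Sum.inl vb) :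
    (OG src dst vo).Adj (fmap src dst vo a.1) (fmap src dst vo b.1) := by
  rw [ha, hb]
  obtain ⟨hne, h | h⟩ := h
  · obtain ⟨e, _, hte, hhe⟩ := h
    rw [ha] at hte; rw [hb] at hhe
    refine ⟨?_, Or.inl ⟨⟨e, hte ▸ va.2, hhe.2⟩, Set.mem_univ _, Subtype.ext hte, Subtype.ext hhe.1⟩⟩
    intro hvv
    exact hne (Subtype.ext (ha.trans ((congrArg Sum.inl hvv).trans hb.symm)))
  · obtain ⟨e, _, hte, hhe⟩ := h
    rw [hb] at hte; rw [ha] at hhe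
    refine ⟨?_, Or.inr ⟨⟨e, hte ▸ vb.2, hhe.2⟩, Set.mem_univ _, Subtype.ext hte, Subtype.ext hhe.1⟩⟩
    intro hvv
    exact hne (Subtype.ext (ha.trans ((congrArg Sum.inl hvv).trans hb.symm)))

/-- A copy of `v_o` has a unique possible neighbor in the kept graph. -/
private theorem neighbor_of_inr {z y : KeptV src dst vo vc hvc} {w}
    (hz : z.1 = Sum.inr w) (h : (KG src dst vo vc hvc).Adj z y) :
    y.1 = Sum.inl ⟨w.1, w.2.1⟩ := by
  obtain ⟨hne, h | h⟩ := h
  · obtain ⟨e, _, hte, hhe⟩ := h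
    rw [hz] at hte
    cases hy : y.1 with
    | inl v =>
      rw [hy] at hhe
      exact congrArg Sum.inl (Subtype.ext (hhe.1.symm.trans hte.2))
    | inr w' =>
      rw [hy] at hhe
      exact absurd (hte.2.symm.trans hhe.1) w.2.1
  · obtain ⟨e, _, hte, hhe⟩ := h
    rw [hz] at hhe
    cases hy : y.1 with
    | inl v =>
      rw [hy] at hte
      exact congrArg Sum.inl (Subtype.ext (hte.symm.trans hhe.2))
    | inr w' =>
      rw [hy] at hte
      exact absurd (hte.1.symm.trans hhe.2) (fun hh => w.2.1 hh.symm)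

/-- Cycles in the kept graph avoid copies of `v_o`. -/
private theorem cycle_support_inl {u : KeptV src dst vo vc hvc}
    {p : (KG src dst vo vc hvc).Walk u u} (hp : p.IsCycle) :
    ∀ z ∈ p.support, ∃ v, z.1 = Sum.inl v := by
  classical
  intro z hz
  cases hz1 : z.1 with
  | inl v => exact ⟨v, rfl⟩
  | inr w =>
    exfalso
    have hq := hp.rotate hz
    set q := p.rotate z hz with hqdef
    clear_value q
    cases q with
    | nil => exact hq.ne_nil rfl
    | @cons _ y _ h' p' =>
      rw [SimpleGraph.Walk.cons_isCycle_iff] at hq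
      have hy : y.1 = Sum.inl ⟨w.1, w.2.1⟩ := neighbor_of_inr hz1 h'
      have hlen : 2 ≤ p'.length := by
        have := (hp.rotate hz).three_le_length
        rw [← hqdef] at this
        simpa using this
      have hdne : p'.darts ≠ [] := by
        rw [← List.length_pos_iff_ne_nil, SimpleGraph.Walk.length_darts]
        omega
      set d := p'.darts.getLast hdne with hd
      have hsnd : d.snd = z := by rw [hd, SimpleGraph.Walk.getLast_darts_eq_lastDart]; rfl
      have hfst : d.fst = y := by
        have hadj : (KG src dst vo vc hvc).Adj z d.fst := (hsnd ▸ d.adj).symm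
        have := neighbor_of_inr hz1 hadj
        exact Subtype.ext (this.trans hy.symm)
      have hmem : d.edge ∈ p'.edges := List.mem_map_of_mem (List.getLast_mem hdne)
      have hdp : d.toProd = (y, z) := Prod.ext hfst hsnd
      rw [SimpleGraph.Dart.edge, hdp, Sym2.eq_swap] at hmem
      exact hq.2 hmem

/-- Map a walk in the kept graph, all of whose vertices are ordinary, to `OG`. -/
private theorem walk_map {x y : KeptV src dst vo vc hvc}
    (p : (KG src dst vo vc hvc).Walk x y)
    (hs : ∀ z ∈ p.support, ∃ v, z.1 = Sum.inl v) :
    ∃ q : (OG src dst vo).Walk (fmap src dst vo x.1) (fmap src dst vo y.1),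
      q.support = p.support.map (fun z => fmap src dst vo z.1) ∧
      q.edges = p.edges.map (Sym2.map (fun z => fmap src dst vo z.1)) := by
  induction p with
  | nil => exact ⟨SimpleGraph.Walk.nil, by simp, by simp⟩
  | @cons a b c h p ih =>
    obtain ⟨q, hqs, hqe⟩ := ih (fun z hz => hs z (by simp [hz]))
    obtain ⟨va, hva⟩ := hs a (by simp)
    obtain ⟨vb, hvb⟩ := hs b (by simp)
    refine ⟨SimpleGraph.Walk.cons (adj_inl h hva hvb) q, ?_, ?_⟩
    · simp [hqs]
    · simp [hqe, Sym2.map_pair_eq]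

private theorem fmap_injOn {z z' : KeptV src dst vo vc hvc}
    (hz : ∃ v, z.1 = Sum.inl v) (hz' : ∃ v, z'.1 = Sum.inl v)
    (h : fmap src dst vo z.1 = fmap src dst vo z'.1) : z = z' := by
  obtain ⟨v, hv⟩ := hz
  obtain ⟨v', hv'⟩ := hz'
  rw [hv, hv'] at h
  exact Subtype.ext (hv.trans ((congrArg Sum.inl h).trans hv'.symm))

private theorem kg_acyclic
    (hfat : IsFatTree (E := {e : E // src e ≠ vo ∧ dst e ≠ vo})
      (fun e => (⟨src e.1, e.2.1⟩ : {v : V // v ≠ vo}))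
      (fun e => (⟨dst e.1, e.2.2⟩ : {v : V // v ≠ vo}))
      Set.univ) :
    (KG src dst vo vc hvc).IsAcyclic := by
  have hO : (OG src dst vo).IsTree := hfat
  intro u p hp
  have hall := cycle_support_inl hp
  obtain ⟨q, hqs, hqe⟩ := walk_map p hall
  refine hO.2 q ?_
  rw [SimpleGraph.Walk.isCycle_def, SimpleGraph.Walk.isTrail_def]
  refine ⟨?_, ?_, ?_⟩
  · -- edges nodup
    rw [hqe]
    refine List.Nodup.map_on ?_ hp.isTrail.edges_nodup
    intro s hsm t htm hst
    induction s using Sym2.ind with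
    | _ a b =>
      induction t using Sym2.ind with
      | _ c d =>
        have ha := hall a (SimpleGraph.Walk.fst_mem_support_of_mem_edges p hsm)
        have hb := hall b (SimpleGraph.Walk.snd_mem_support_of_mem_edges p hsm)
        have hc := hall c (SimpleGraph.Walk.fst_mem_support_of_mem_edges p htm)
        have hd := hall d (SimpleGraph.Walk.snd_mem_support_of_mem_edges p htm)
        rw [Sym2.map_pair_eq, Sym2.map_pair_eq, Sym2.eq_iff] at hst
        rcases hst with ⟨h1, h2⟩ | ⟨h1, h2⟩
        · rw [fmap_injOn ha hc h1, fmap_injOn hb hd h2]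
        · rw [fmap_injOn ha hd h1, fmap_injOn hb hc h2, Sym2.eq_swap]
  · -- q ≠ nil
    intro hnil
    have : q.edges = [] := by rw [hnil]; rfl
    rw [hqe] at this
    have hpe : p.edges = [] := List.map_eq_nil_iff.mp this
    have := hp.three_le_length
    rw [← SimpleGraph.Walk.length_edges, hpe] at this
    simp at this
  · -- support tail nodup
    rw [hqs, ← List.map_tail]
    refine List.Nodup.map_on ?_ hp.support_nodup
    intro s hsm t htm hst
    exact fmap_injOn (hall s (List.mem_of_mem_tail hsm)) (hall t (List.mem_of_mem_tail htm)) hst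

variable (src dst vo)

/-- If `G - v_o` is a directed fat tree, then the subgraph consisting of all
arcs on some directed path from a copy of `v_o` (one leaf copy per neighbor)
to `v_c` is again a directed fat tree. -/
theorem stmt15 [Fintype V] [Fintype E] [DecidableEq V]
    (vc : V) (hvc : vc ≠ vo)
    (hloop : ∀ e, ¬ (src e = vo ∧ dst e = vo))
    (hfat : IsFatTree (E := {e : E // src e ≠ vo ∧ dst e ≠ vo})
      (fun e => (⟨src e.1, e.2.1⟩ : {v : V // v ≠ vo}))
      (fun e => (⟨dst e.1, e.2.2⟩ : {v : V // v ≠ vo}))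
      Set.univ) :
    (SimpleGraph.fromRel
      (fun a b : KeptV src dst vo vc hvc =>
        ∃ e, Kept src dst vo vc hvc e ∧
          AtTail src dst vo a.1 e ∧ AtHead src dst vo b.1 e)).IsTree := by
  exact ⟨kg_connected, kg_acyclic hfat⟩

end
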